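/- arXiv:1302.5920 — 2 statements merged into one kernel-verified Lean document; each statement's English description precedes it below -/
import Mathlib

section
/- Let F₂ be the free group on a, b acting on its boundary Ω of infinite reduced words. This action is topologically free: for every g ∈ F₂ with g ≠ 1, the fixed point set {ω ∈ Ω : g·ω = ω} has empty interior in Ω. -/
open Topology

/-- The letters `a, a⁻¹, b, b⁻¹`: a letter is a generator index in `Fin 2`
together with a sign. -/
abbrev Letter : Type := Fin 2 × Bool

/-- The formal inverse of a letter. -/
def letterInv (x : Letter) : Letter := (x.1, !x.2)

/-- The space of infinite reduced words, topologized as a subspace of the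
product space `Letter ^ ℕ`. -/
def Omega : Type := {x : ℕ → Letter // ∀ n, x (n + 1) ≠ letterInv (x n)}

instance : TopologicalSpace Omega :=
  inferInstanceAs (TopologicalSpace {x : ℕ → Letter // ∀ n, x (n + 1) ≠ letterInv (x n)})


/-- Prepend a single letter to an infinite reduced word, performing the free
reduction: if the word begins with the inverse letter, cancel it. -/
def prependLetter (x : Letter) (ω : Omega) : Omega :=
  if h : ω.1 0 = letterInv x then
    ⟨fun n => ω.1 (n + 1), fun n => ω.2 (n + 1)⟩
  else
    ⟨fun n => Nat.rec x (fun k _ => ω.1 k) n, by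
      intro n
      cases n with
      | zero => exact h
      | succ k => exact ω.2 k⟩

/-- The action of `g ∈ F₂` on an infinite reduced word: prepend the reduced word
of `g` letter by letter, reducing as one goes. -/
def freeAct (g : FreeGroup (Fin 2)) (ω : Omega) : Omega :=
  g.toWord.foldr prependLetter ω

/- ---------------- Auxiliary material ---------------- -/

lemma letterInv_letterInv (x : Letter) : letterInv (letterInv x) = x := by
  cases x; simp [letterInv]

lemma prepend_cancel {x : Letter} {ω : Omega} (h : ω.1 0 = letterInv x) (n : ℕ) :
    (prependLetter x ω).1 n = ω.1 (n + 1) := by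
  simp [prependLetter, h]

lemma prepend_zero {x : Letter} {ω : Omega} (h : ω.1 0 ≠ letterInv x) :
    (prependLetter x ω).1 0 = x := by
  simp [prependLetter, h]

lemma prepend_succ {x : Letter} {ω : Omega} (h : ω.1 0 ≠ letterInv x) (n : ℕ) :
    (prependLetter x ω).1 (n + 1) = ω.1 n := by
  simp [prependLetter, h]

/-- A list of letters is reduced. -/
def Reduced (w : List Letter) : Prop :=
  ∀ i, i + 1 < w.length → w.getD (i + 1) default ≠ letterInv (w.getD i default)

lemma reduced_tail {x : Letter} {w : List Letter} (h : Reduced (x :: w)) : Reduced w := by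
  intro i hi
  have := h (i + 1) (by simpa using Nat.succ_lt_succ hi)
  simpa using this

lemma toWord_reduced (g : FreeGroup (Fin 2)) : Reduced (FreeGroup.toWord g) := by
  intro i hi heq
  have hlen : i < g.toWord.length := by omega
  have h2 : g.toWord[i+1]'hi = letterInv (g.toWord[i]'hlen) := by
    rwa [List.getD_eq_getElem _ _ hi, List.getD_eq_getElem _ _ hlen] at heq
  refine FreeGroup.reduce.not (L₁ := g.toWord) (L₂ := g.toWord.take i) (L₃ := g.toWord.drop (i+2))
    (x := (g.toWord[i]'hlen).1) (b := (g.toWord[i]'hlen).2) ?_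
  rw [FreeGroup.reduce_toWord]
  conv_lhs => rw [← List.take_append_drop i g.toWord,
    List.drop_eq_getElem_cons hlen, List.drop_eq_getElem_cons hi]
  rw [h2]
  simp [letterInv]

/-- Key structural lemma: prepending a reduced word `w` to `ω` cancels some `k`
initial letters of `ω` against the last `k` of `w`, leaving `r = |w| - k`
letters of `w` in front. -/
lemma foldr_spec : ∀ (w : List Letter), Reduced w → ∀ (ω : Omega),
    ∃ k r : ℕ, k + r = w.length ∧
      (∀ i, i < r → (w.foldr prependLetter ω).1 i = w.getD i default) ∧
      (∀ i, r ≤ i → (w.foldr prependLetter ω).1 i = ω.1 (i - r + k)) ∧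
      (∀ j, j < k → ω.1 j = letterInv (w.getD (w.length - 1 - j) default))
  | [], _, ω => ⟨0, 0, rfl, fun i hi => absurd hi (by omega),
      fun i _ => by simp, fun j hj => absurd hj (by omega)⟩
  | x :: w', hw, ω => by
    obtain ⟨k, r, hkr, h1, h2, h3⟩ := foldr_spec w' (reduced_tail hw) ω
    set σ := w'.foldr prependLetter ω with hσ
    have hfold : (x :: w').foldr prependLetter ω = prependLetter x σ := rfl
    by_cases hc : σ.1 0 = letterInv x
    · -- cancellation occurs; this forces r = 0
      have hr0 : r = 0 := by
        by_contra hr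
        have hw'len : 0 < w'.length := by omega
        have : σ.1 0 = w'.getD 0 default := h1 0 (by omega)
        have hne : w'.getD 0 default ≠ letterInv x := by
          have := hw 0 (by simpa using hw'len)
          simpa using this
        exact hne (this ▸ hc)
      subst hr0
      have hk : k = w'.length := by omega
      have hc' : ω.1 k = letterInv x := by
        have := h2 0 (le_refl 0)
        simp at this
        rw [this] at hc; exact hc
      refine ⟨k + 1, 0, by simp; omega, fun i hi => absurd hi (by omega), ?_, ?_⟩
      · intro i _
        rw [hfold, prepend_cancel hc]
        have := h2 (i + 1) (by omega)
        rw [this]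
        exact congrArg ω.1 (by omega)
      · intro j hj
        rcases Nat.lt_or_ge j k with hjk | hjk
        · have := h3 j hjk
          have hidx : (x :: w').length - 1 - j = (w'.length - 1 - j) + 1 := by
            simp; omega
          rw [hidx, List.getD_cons_succ]
          exact this
        · have hjek : j = k := by omega
          subst hjek
          have hidx : (x :: w').length - 1 - j = 0 := by simp; omega
          rw [hidx, List.getD_cons_zero]
          exact hc'
    · -- no cancellation
      refine ⟨k, r + 1, by simp; omega, ?_, ?_, ?_⟩
      · intro i hi
        cases i with
        | zero => rw [hfold, prepend_zero hc, List.getD_cons_zero]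
        | succ m =>
          rw [hfold, prepend_succ hc, List.getD_cons_succ]
          exact h1 m (by omega)
      · intro i hi
        obtain ⟨m, rfl⟩ : ∃ m, i = m + 1 := ⟨i - 1, by omega⟩
        rw [hfold, prepend_succ hc]
        have := h2 m (by omega)
        rw [this]
        exact congrArg ω.1 (by omega)
      · intro j hj
        have hidx : (x :: w').length - 1 - j = (w'.length - 1 - j) + 1 := by
          simp; omega
        rw [hidx, List.getD_cons_succ]
        exact h3 j hj

/-- Every point in the interior of a set admits a cylinder neighborhood. -/
lemma cylinder_mem {S : Set Omega} {μ : Omega} (h : μ ∈ interior S) :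
    ∃ n, ∀ ω : Omega, (∀ i, i < n → ω.1 i = μ.1 i) → ω ∈ S := by
  have hS : S ∈ 𝓝 μ := mem_interior_iff_mem_nhds.mp h
  erw [nhds_subtype] at hS
  obtain ⟨T, hT, hTS⟩ := hS
  rw [nhds_pi] at hT
  obtain ⟨I, t, ht, hsub⟩ := Filter.mem_pi'.mp hT
  refine ⟨I.sup id + 1, fun ω hω => ?_⟩
  apply hTS
  apply hsub
  intro i hi
  have : ω.1 i = μ.1 i := hω i (Nat.lt_succ_of_le (Finset.le_sup (f := id) hi))
  rw [this]
  exact mem_of_mem_nhds (ht i)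

/-- The perturbed word: agrees with `μ` up to `n`, then one special letter,
a single `b`, and `a`s forever. -/
def tailWord (μ : Omega) (n : ℕ) : ℕ → Letter := fun i =>
  if i < n then μ.1 i
  else if i = n then
    (if ((0 : Fin 2), true) = letterInv (μ.1 (n - 1)) then ((1 : Fin 2), true)
     else ((0 : Fin 2), true))
  else if i = n + 1 then ((1 : Fin 2), true) else ((0 : Fin 2), true)

lemma tailWord_of_lt {μ : Omega} {n i : ℕ} (h : i < n) : tailWord μ n i = μ.1 i := by
  unfold tailWord; rw [if_pos h]

lemma tailWord_at_n {μ : Omega} {n : ℕ} :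
    tailWord μ n n = (if ((0 : Fin 2), true) = letterInv (μ.1 (n - 1)) then ((1 : Fin 2), true)
      else ((0 : Fin 2), true)) := by
  unfold tailWord; rw [if_neg (lt_irrefl n), if_pos rfl]

lemma tailWord_at_n1 {μ : Omega} {n : ℕ} : tailWord μ n (n + 1) = ((1 : Fin 2), true) := by
  unfold tailWord; rw [if_neg (by omega), if_neg (by omega), if_pos rfl]

lemma tailWord_of_gt {μ : Omega} {n i : ℕ} (h : n + 1 < i) : tailWord μ n i = ((0 : Fin 2), true) := by
  unfold tailWord; rw [if_neg (by omega), if_neg (by omega), if_neg (by omega)]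

lemma tailWord_reduced (μ : Omega) (n : ℕ) (hn : 1 ≤ n) :
    ∀ i, tailWord μ n (i + 1) ≠ letterInv (tailWord μ n i) := by
  intro i
  by_cases hA : i + 1 < n
  · rw [tailWord_of_lt hA, tailWord_of_lt (by omega)]
    exact μ.2 i
  by_cases hB : i + 1 = n
  · rw [hB, tailWord_at_n, tailWord_of_lt (by omega : i < n),
      (by omega : i = n - 1)]
    split
    · rename_i hcase
      rw [← hcase]
      decide
    · rename_i hcase; exact hcase
  by_cases hC : i = n
  · subst hC
    rw [tailWord_at_n1, tailWord_at_n]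
    split <;> decide
  · rw [tailWord_of_gt (by omega : n + 1 < i + 1)]
    by_cases hD : i = n + 1
    · rw [hD, tailWord_at_n1]; decide
    · rw [tailWord_of_gt (by omega)]; decide

/-- The boundary action of `F₂` is topologically free: no nontrivial group
element fixes a nonempty open set pointwise. -/
theorem stmt_9 :
    ∀ g : FreeGroup (Fin 2), g ≠ 1 →
      interior {ω : Omega | freeAct g ω = ω} = ∅ := by
  intro g hg
  rw [Set.eq_empty_iff_forall_notMem]
  intro μ hμ
  have hwred : Reduced g.toWord := toWord_reduced g
  have hwne : g.toWord ≠ [] := fun h => hg (FreeGroup.toWord_eq_nil_iff.mp h)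
  set L := g.toWord.length with hLdef
  have hL : 1 ≤ L := List.length_pos_iff.mpr hwne
  obtain ⟨n₀, hn₀⟩ := cylinder_mem hμ
  set n := max n₀ (L + 1) with hndef
  have hnL : L + 1 ≤ n := le_max_right _ _
  have hcyl : ∀ ω : Omega, (∀ i, i < n → ω.1 i = μ.1 i) → freeAct g ω = ω :=
    fun ω h => hn₀ ω (fun i hi => h i (lt_of_lt_of_le hi (le_max_left _ _)))
  set ω' : Omega := ⟨tailWord μ n, tailWord_reduced μ n (by omega)⟩ with hω'
  have hfix : freeAct g ω' = ω' := hcyl ω' (fun i hi => tailWord_of_lt hi)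
  obtain ⟨k, r, hkr, h1, h2, h3⟩ := foldr_spec g.toWord hwred ω'
  have hfix' : ∀ i, (g.toWord.foldr prependLetter ω').1 i = ω'.1 i := by
    intro i
    show (freeAct g ω').1 i = ω'.1 i
    rw [hfix]
  -- evaluate tailWord off the prefix
  have hb : ω'.1 (n + 1) = ((1 : Fin 2), true) := tailWord_at_n1
  have ha : ∀ m, n + 1 < m → ω'.1 m = ((0 : Fin 2), true) := fun m hm => tailWord_of_gt hm
  rcases lt_trichotomy k r with hlt | heq | hgt
  · -- k < r : period p = r - k starting at k
    have hcon := h2 (n + 1 + (r - k)) (by omega)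
    rw [hfix'] at hcon
    have hidx : n + 1 + (r - k) - r + k = n + 1 := by omega
    rw [hidx] at hcon
    rw [hb, ha _ (by omega)] at hcon
    exact absurd hcon (by decide)
  · -- k = r : contradicts reducedness of the word
    subst heq
    have hk1 : 1 ≤ k := by omega
    have e1 : ω'.1 (k - 1) = g.toWord.getD (k - 1) default := by
      have := h1 (k - 1) (by omega)
      rw [hfix'] at this
      exact this
    have e2 : ω'.1 (k - 1) = letterInv (g.toWord.getD (L - 1 - (k - 1)) default) :=
      h3 (k - 1) (by omega)
    have hidx : L - 1 - (k - 1) = k := by omega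
    rw [hidx] at e2
    have : g.toWord.getD k default = letterInv (g.toWord.getD (k - 1) default) := by
      rw [← e1, e2, letterInv_letterInv]
    have hred := hwred (k - 1) (by omega)
    rw [(by omega : k - 1 + 1 = k)] at hred
    exact hred this
  · -- k > r : period p = k - r starting at r
    have hcon := h2 (n + 1) (by omega)
    rw [hfix'] at hcon
    have hidx : n + 1 - r + k = n + 1 + (k - r) := by omega
    rw [hidx] at hcon
    rw [hb, ha _ (by omega)] at hcon
    exact absurd hcon (by decide)
end

section
/- Let F be a field and p an upper triangular invertible 3×3 matrix over F that is not a scalar matrix. Then there exists an invertible 3×3 matrix k over F such that k⁻¹ p k is not upper triangular, provided F has more than 3 elements. -/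
open Matrix

lemma aux15 {F : Type} [Field F] (p k k' : Matrix (Fin 3) (Fin 3) F)
    (h1 : k * k' = 1) (h2 : k' * k = 1) (i j : Fin 3) (hij : j < i)
    (hne : (k' * p * k) i j ≠ 0) :
    ∃ k : Matrix (Fin 3) (Fin 3) F, IsUnit k ∧
      ¬ Matrix.BlockTriangular (k⁻¹ * p * k) id := by
  refine ⟨k, ⟨⟨k, k', h1, h2⟩, rfl⟩, fun hbt => ?_⟩
  rw [Matrix.inv_eq_left_inv h2] at hbt
  exact hne (hbt (show id j < id i from hij))

/-- Over a field with more than 3 elements, every invertible upper triangular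
`3×3` matrix that is not scalar is conjugate to a matrix that is not upper
triangular. -/
theorem stmt_15 (F : Type) [Field F]
    (hF : 3 < Nat.card F ∨ Infinite F)
    (p : Matrix (Fin 3) (Fin 3) F)
    (hp : Matrix.BlockTriangular p id)
    (hunit : IsUnit p)
    (hscalar : ¬∃ c : F, p = c • (1 : Matrix (Fin 3) (Fin 3) F)) :
    ∃ k : Matrix (Fin 3) (Fin 3) F, IsUnit k ∧
      ¬ Matrix.BlockTriangular (k⁻¹ * p * k) id := by
  have h10 : p 1 0 = 0 := hp (show id 0 < id 1 by decide)
  have h20 : p 2 0 = 0 := hp (show id 0 < id 2 by decide)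
  have h21 : p 2 1 = 0 := hp (show id 1 < id 2 by decide)
  have inv1 : ∀ M N : Matrix (Fin 3) (Fin 3) F, (∀ i j, (M * N) i j = (1 : Matrix (Fin 3) (Fin 3) F) i j) → M * N = 1 := by
    intro M N h; ext i j; exact h i j
  by_cases h01 : p 0 1 ≠ 0
  · refine aux15 p !![0,1,0;1,0,0;0,0,1] !![0,1,0;1,0,0;0,0,1]
      (inv1 _ _ (by intro i j; fin_cases i <;> fin_cases j <;> simp [Matrix.mul_apply, Fin.sum_univ_three, Matrix.one_apply, Matrix.vecHead, Matrix.vecTail])) (inv1 _ _ (by intro i j; fin_cases i <;> fin_cases j <;> simp [Matrix.mul_apply, Fin.sum_univ_three, Matrix.one_apply, Matrix.vecHead, Matrix.vecTail])) 1 0 (by decide) ?_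
    have : ((!![0,1,0;1,0,0;0,0,1] : Matrix (Fin 3) (Fin 3) F) * p * !![0,1,0;1,0,0;0,0,1] : Matrix (Fin 3) (Fin 3) F) 1 0 = p 0 1 := by
      simp [Matrix.mul_apply, Fin.sum_univ_three, Matrix.vecHead, Matrix.vecTail, Matrix.vecMul, dotProduct]
    rw [this]; exact h01
  push_neg at h01
  by_cases h02 : p 0 2 ≠ 0
  · refine aux15 p !![0,0,1;0,1,0;1,0,0] !![0,0,1;0,1,0;1,0,0]
      (inv1 _ _ (by intro i j; fin_cases i <;> fin_cases j <;> simp [Matrix.mul_apply, Fin.sum_univ_three, Matrix.one_apply, Matrix.vecHead, Matrix.vecTail])) (inv1 _ _ (by intro i j; fin_cases i <;> fin_cases j <;> simp [Matrix.mul_apply, Fin.sum_univ_three, Matrix.one_apply, Matrix.vecHead, Matrix.vecTail])) 2 0 (by decide) ?_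
    have : ((!![0,0,1;0,1,0;1,0,0] : Matrix (Fin 3) (Fin 3) F) * p * !![0,0,1;0,1,0;1,0,0] : Matrix (Fin 3) (Fin 3) F) 2 0 = p 0 2 := by
      simp [Matrix.mul_apply, Fin.sum_univ_three, Matrix.vecHead, Matrix.vecTail, Matrix.vecMul, dotProduct]
    rw [this]; exact h02
  push_neg at h02
  by_cases h12 : p 1 2 ≠ 0
  · refine aux15 p !![1,0,0;0,0,1;0,1,0] !![1,0,0;0,0,1;0,1,0]
      (inv1 _ _ (by intro i j; fin_cases i <;> fin_cases j <;> simp [Matrix.mul_apply, Fin.sum_univ_three, Matrix.one_apply, Matrix.vecHead, Matrix.vecTail])) (inv1 _ _ (by intro i j; fin_cases i <;> fin_cases j <;> simp [Matrix.mul_apply, Fin.sum_univ_three, Matrix.one_apply, Matrix.vecHead, Matrix.vecTail])) 2 1 (by decide) ?_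
    have : ((!![1,0,0;0,0,1;0,1,0] : Matrix (Fin 3) (Fin 3) F) * p * !![1,0,0;0,0,1;0,1,0] : Matrix (Fin 3) (Fin 3) F) 2 1 = p 1 2 := by
      simp [Matrix.mul_apply, Fin.sum_univ_three, Matrix.vecHead, Matrix.vecTail, Matrix.vecMul, dotProduct]
    rw [this]; exact h12
  push_neg at h12
  by_cases hd : p 1 1 ≠ p 0 0
  · refine aux15 p !![1,0,0;1,1,0;0,0,1] !![1,0,0;-1,1,0;0,0,1]
      (inv1 _ _ ?_) (inv1 _ _ ?_) 1 0 (by decide) ?_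
    · intro i j; fin_cases i <;> fin_cases j <;>
        simp [Matrix.mul_apply, Fin.sum_univ_three, Matrix.one_apply, Matrix.vecHead, Matrix.vecTail]
    · intro i j; fin_cases i <;> fin_cases j <;>
        simp [Matrix.mul_apply, Fin.sum_univ_three, Matrix.one_apply, Matrix.vecHead, Matrix.vecTail]
    have : ((!![1,0,0;-1,1,0;0,0,1] : Matrix (Fin 3) (Fin 3) F) * p * !![1,0,0;1,1,0;0,0,1] : Matrix (Fin 3) (Fin 3) F) 1 0
        = -(p 0 0) - p 0 1 + p 1 0 + p 1 1 := by
      simp [Matrix.mul_apply, Fin.sum_univ_three, Matrix.vecHead, Matrix.vecTail, Matrix.vecMul, dotProduct]; ring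
    rw [this, h01, h10]
    intro h; exact hd (by linear_combination h)
  push_neg at hd
  by_cases hd2 : p 2 2 ≠ p 0 0
  · refine aux15 p !![1,0,0;0,1,0;1,0,1] !![1,0,0;0,1,0;-1,0,1]
      (inv1 _ _ ?_) (inv1 _ _ ?_) 2 0 (by decide) ?_
    · intro i j; fin_cases i <;> fin_cases j <;>
        simp [Matrix.mul_apply, Fin.sum_univ_three, Matrix.one_apply, Matrix.vecHead, Matrix.vecTail]
    · intro i j; fin_cases i <;> fin_cases j <;>
        simp [Matrix.mul_apply, Fin.sum_univ_three, Matrix.one_apply, Matrix.vecHead, Matrix.vecTail]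
    have : ((!![1,0,0;0,1,0;-1,0,1] : Matrix (Fin 3) (Fin 3) F) * p * !![1,0,0;0,1,0;1,0,1] : Matrix (Fin 3) (Fin 3) F) 2 0
        = -(p 0 0) - p 0 2 + p 2 0 + p 2 2 := by
      simp [Matrix.mul_apply, Fin.sum_univ_three, Matrix.vecHead, Matrix.vecTail, Matrix.vecMul, dotProduct]; ring
    rw [this, h02, h20]
    intro h; exact hd2 (by linear_combination h)
  push_neg at hd2
  exfalso
  apply hscalar
  refine ⟨p 0 0, ?_⟩
  ext i j
  fin_cases i <;> fin_cases j <;>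
    simp [Matrix.one_apply, h01, h02, h12, h10, h20, h21, hd, hd2]
end
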